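/- The function ψ is infinite harmonic away from the singularity: at every point of ℝ^{2n+1} ∖ {x₀} where Σ ≠ 0, Δ_∞ ψ = Σ_{i,j=1}^{2n} X_i ψ · X_j ψ · X_i X_j ψ = 0. -/

import Mathlib

open MeasureTheory Real Filter

noncomputable section

/-- Points of `ℝ^{2n+1}`: the `2n` horizontal coordinates indexed by `Fin n ⊕ Fin n`
(`Sum.inl i` encodes the coordinate `x_i` for `1 ≤ i ≤ n`, and `Sum.inr i` encodes the
coordinate `x_{i+n}`), together with the vertical coordinate `t`. -/
abbrev Pt (n : ℕ) := ((Fin n ⊕ Fin n) → ℝ) × ℝ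

/-- `Σ(x) = ∑_{l=1}^{2n} (x_l - a_l)²`. -/
def Sg (n : ℕ) (a : Fin n ⊕ Fin n → ℝ) (x : Pt n) : ℝ :=
  ∑ l : Fin n ⊕ Fin n, (x.1 l - a l) ^ 2

/-- Partial derivative `∂u/∂x_l` in the `l`-th horizontal coordinate direction. -/
def pdx (n : ℕ) (l : Fin n ⊕ Fin n) (u : Pt n → ℝ) (x : Pt n) : ℝ :=
  fderiv ℝ u x (Pi.single l 1, 0)

/-- Partial derivative `∂u/∂t` in the vertical direction. -/
def pdt (n : ℕ) (u : Pt n → ℝ) (x : Pt n) : ℝ :=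
  fderiv ℝ u x (0, 1)

/-- The Hörmander vector fields:
`X_i u = ∂u/∂x_i + 2kc (x_{i+n} - a_{i+n}) Σ^{k-1} ∂u/∂t` for `1 ≤ i ≤ n`, and
`X_j u = ∂u/∂x_j - 2kc (x_{j-n} - a_{j-n}) Σ^{k-1} ∂u/∂t` for `n+1 ≤ j ≤ 2n`. -/
def X (n : ℕ) (k c : ℝ) (a : Fin n ⊕ Fin n → ℝ) (l : Fin n ⊕ Fin n)
    (u : Pt n → ℝ) (x : Pt n) : ℝ :=
  match l with
  | Sum.inl i => pdx n (Sum.inl i) u x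
      + 2 * k * c * (x.1 (Sum.inr i) - a (Sum.inr i)) * Sg n a x ^ (k - 1) * pdt n u x
  | Sum.inr j => pdx n (Sum.inr j) u x
      - 2 * k * c * (x.1 (Sum.inl j) - a (Sum.inl j)) * Sg n a x ^ (k - 1) * pdt n u x

/-- Norm of the horizontal gradient `∇₀u = (X₁u, …, X_{2n}u)`. -/
def hnorm (n : ℕ) (k c : ℝ) (a : Fin n ⊕ Fin n → ℝ) (u : Pt n → ℝ) (x : Pt n) : ℝ :=
  Real.sqrt (∑ l : Fin n ⊕ Fin n, (X n k c a l u x) ^ 2)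

/-- The `p`-Laplacian `Δ_p u = ∑_{l=1}^{2n} X_l (‖∇₀u‖^{p-2} X_l u)`. -/
def pLap (n : ℕ) (k c : ℝ) (a : Fin n ⊕ Fin n → ℝ) (p : ℝ) (u : Pt n → ℝ) (x : Pt n) : ℝ :=
  ∑ l : Fin n ⊕ Fin n,
    X n k c a l (fun y => hnorm n k c a u y ^ (p - 2) * X n k c a l u y) x

/-- `h(x) = c² Σ(x)^{2k} + (t-s)²`. -/
def hfun (n : ℕ) (k c : ℝ) (a : Fin n ⊕ Fin n → ℝ) (s : ℝ) (x : Pt n) : ℝ :=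
  c ^ 2 * Sg n a x ^ (2 * k) + (x.2 - s) ^ 2

/-- `ψ = h^{1/(4k)}`. -/
def psi (n : ℕ) (k c : ℝ) (a : Fin n ⊕ Fin n → ℝ) (s : ℝ) (x : Pt n) : ℝ :=
  hfun n k c a s x ^ (1 / (4 * k))

/-! ### Auxiliary machinery for the proof -/

/-- Directional derivative. -/
def dv (n : ℕ) (v : Pt n) (u : Pt n → ℝ) (y : Pt n) : ℝ := fderiv ℝ u y v

/-- Sign of the vector field correction term. -/
def eps {n : ℕ} : Fin n ⊕ Fin n → ℝ := Sum.elim (fun _ => 1) fun _ => -1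

/-- The pairing involution on indices. -/
def sig {n : ℕ} : Fin n ⊕ Fin n → Fin n ⊕ Fin n := Sum.elim Sum.inr Sum.inl

/-- Closed form for `X_l h / (4kc)`. -/
def gg (n : ℕ) (k c : ℝ) (a : Fin n ⊕ Fin n → ℝ) (s : ℝ) (l : Fin n ⊕ Fin n)
    (y : Pt n) : ℝ :=
  c * ((y.1 l - a l) * Sg n a y ^ (2 * k - 1))
  + eps l * ((y.1 (sig l) - a (sig l)) * (Sg n a y ^ (k - 1) * (y.2 - s)))

/-- Closed form for `X_l ψ`. -/
def FF (n : ℕ) (k c : ℝ) (a : Fin n ⊕ Fin n → ℝ) (s : ℝ) (l : Fin n ⊕ Fin n)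
    (y : Pt n) : ℝ :=
  c * (hfun n k c a s y ^ (1 / (4 * k) - 1) * gg n k c a s l y)

section Aux

variable {n : ℕ} {k c : ℝ} {a : Fin n ⊕ Fin n → ℝ} {s : ℝ}

lemma diff_fst (l : Fin n ⊕ Fin n) (y : Pt n) :
    DifferentiableAt ℝ (fun z : Pt n => z.1 l) y :=
  ((ContinuousLinearMap.proj l).comp
    (ContinuousLinearMap.fst ℝ ((Fin n ⊕ Fin n) → ℝ) ℝ)).differentiableAt

lemma diff_snd (y : Pt n) : DifferentiableAt ℝ (fun z : Pt n => z.2) y :=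
  (ContinuousLinearMap.snd ℝ ((Fin n ⊕ Fin n) → ℝ) ℝ).differentiableAt

lemma dv_fst (v : Pt n) (l : Fin n ⊕ Fin n) (y : Pt n) :
    dv n v (fun z => z.1 l) y = v.1 l := by
  have : (fun z : Pt n => z.1 l)
      = ((ContinuousLinearMap.proj l).comp
          (ContinuousLinearMap.fst ℝ ((Fin n ⊕ Fin n) → ℝ) ℝ)) := rfl
  rw [dv, this, ContinuousLinearMap.fderiv]
  rfl

lemma dv_snd (v : Pt n) (y : Pt n) : dv n v (fun z => z.2) y = v.2 := by
  have : (fun z : Pt n => z.2) = (ContinuousLinearMap.snd ℝ ((Fin n ⊕ Fin n) → ℝ) ℝ) := rfl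
  rw [dv, this, ContinuousLinearMap.fderiv]
  rfl

lemma dv_mul {v : Pt n} {f g : Pt n → ℝ} {y : Pt n} (hf : DifferentiableAt ℝ f y)
    (hg : DifferentiableAt ℝ g y) :
    dv n v (fun z => f z * g z) y = f y * dv n v g y + g y * dv n v f y := by
  simp [dv, fderiv_fun_mul hf hg]

lemma dv_const_mul {v : Pt n} {f : Pt n → ℝ} {y : Pt n} (hf : DifferentiableAt ℝ f y) (r : ℝ) :
    dv n v (fun z => r * f z) y = r * dv n v f y := by
  simp [dv, fderiv_const_mul hf r]

lemma dv_add {v : Pt n} {f g : Pt n → ℝ} {y : Pt n} (hf : DifferentiableAt ℝ f y)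
    (hg : DifferentiableAt ℝ g y) :
    dv n v (fun z => f z + g z) y = dv n v f y + dv n v g y := by
  simp [dv, fderiv_fun_add hf hg]

lemma dv_sub_const {v : Pt n} {f : Pt n → ℝ} {y : Pt n} (r : ℝ) :
    dv n v (fun z => f z - r) y = dv n v f y := by
  simp [dv, fderiv_sub_const]

lemma dv_rpow {v : Pt n} {f : Pt n → ℝ} {y : Pt n} (hf : DifferentiableAt ℝ f y)
    (h0 : f y ≠ 0) (e : ℝ) :
    dv n v (fun z => f z ^ e) y = e * f y ^ (e - 1) * dv n v f y := by
  rw [dv, (hf.hasFDerivAt.rpow_const (Or.inl h0)).fderiv]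
  simp [dv, mul_assoc]

lemma dv_pow2 {v : Pt n} {f : Pt n → ℝ} {y : Pt n} (hf : DifferentiableAt ℝ f y) :
    dv n v (fun z => f z ^ 2) y = 2 * f y * dv n v f y := by
  simp only [pow_two]
  rw [dv_mul hf hf]; ring

lemma diff_A (l : Fin n ⊕ Fin n) (y : Pt n) :
    DifferentiableAt ℝ (fun z : Pt n => z.1 l - a l) y := (diff_fst l y).sub_const _

lemma dv_A (v : Pt n) (l : Fin n ⊕ Fin n) (y : Pt n) :
    dv n v (fun z => z.1 l - a l) y = v.1 l := by
  rw [dv_sub_const, dv_fst]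

lemma diff_Sg (y : Pt n) : DifferentiableAt ℝ (Sg n a) y := by
  have : Sg n a = fun z : Pt n => ∑ l : Fin n ⊕ Fin n, (z.1 l - a l) ^ 2 := rfl
  rw [this]
  exact DifferentiableAt.fun_sum fun l _ => (diff_A l y).fun_pow 2

lemma dv_Sg (v : Pt n) (y : Pt n) :
    dv n v (Sg n a) y = ∑ l : Fin n ⊕ Fin n, 2 * (y.1 l - a l) * v.1 l := by
  have h1 : Sg n a = fun z : Pt n => ∑ l : Fin n ⊕ Fin n, (z.1 l - a l) ^ 2 := rfl
  rw [h1, dv, fderiv_fun_sum (fun l _ => (diff_A (a := a) l y).fun_pow 2)]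
  rw [ContinuousLinearMap.sum_apply]
  exact Finset.sum_congr rfl fun l _ => by
    rw [← dv, dv_pow2 (diff_A l y), dv_A]

lemma Sg_nonneg (y : Pt n) : 0 ≤ Sg n a y :=
  Finset.sum_nonneg fun l _ => sq_nonneg _

lemma hfun_pos (hc : c ≠ 0) {y : Pt n} (hy : 0 < Sg n a y) : 0 < hfun n k c a s y := by
  have h1 : 0 < c ^ 2 * Sg n a y ^ (2 * k) :=
    mul_pos (by positivity) (rpow_pos_of_pos hy _)
  have := sq_nonneg (y.2 - s)
  unfold hfun; linarith

lemma diff_hfun {y : Pt n} (hy : 0 < Sg n a y) :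
    DifferentiableAt ℝ (hfun n k c a s) y := by
  have : hfun n k c a s = fun z : Pt n =>
      c ^ 2 * Sg n a z ^ (2 * k) + (z.2 - s) ^ 2 := rfl
  rw [this]
  exact (((diff_Sg y).rpow_const (Or.inl hy.ne')).const_mul _).add
    (((diff_snd y).sub_const s).pow 2)

lemma dv_hfun {y : Pt n} (hy : 0 < Sg n a y) (v : Pt n) :
    dv n v (hfun n k c a s) y
      = c ^ 2 * ((2 * k) * Sg n a y ^ (2 * k - 1) * dv n v (Sg n a) y)
        + 2 * (y.2 - s) * v.2 := by
  have h1 : hfun n k c a s = fun z : Pt n =>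
      (fun z : Pt n => c ^ 2 * Sg n a z ^ (2 * k)) z + (fun z : Pt n => (z.2 - s) ^ 2) z := rfl
  rw [h1, dv_add (((diff_Sg y).rpow_const (Or.inl hy.ne')).const_mul _)
    (((diff_snd y).sub_const s).fun_pow 2)]
  rw [dv_const_mul ((diff_Sg y).rpow_const (Or.inl hy.ne')),
    dv_rpow (diff_Sg y) hy.ne', dv_pow2 ((diff_snd y).sub_const s), dv_sub_const, dv_snd]

lemma diff_psi (hc : c ≠ 0) {y : Pt n} (hy : 0 < Sg n a y) :
    DifferentiableAt ℝ (psi n k c a s) y := by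
  have : psi n k c a s = fun z : Pt n => hfun n k c a s z ^ (1 / (4 * k)) := rfl
  rw [this]
  exact (diff_hfun hy).rpow_const (Or.inl (hfun_pos hc hy).ne')

lemma dv_psi (hc : c ≠ 0) {y : Pt n} (hy : 0 < Sg n a y) (v : Pt n) :
    dv n v (psi n k c a s) y
      = (1 / (4 * k)) * hfun n k c a s y ^ (1 / (4 * k) - 1)
          * dv n v (hfun n k c a s) y := by
  have : psi n k c a s = fun z : Pt n => hfun n k c a s z ^ (1 / (4 * k)) := rfl
  rw [this, dv_rpow (diff_hfun hy) (hfun_pos hc hy).ne']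

lemma X_apply (l : Fin n ⊕ Fin n) (u : Pt n → ℝ) (y : Pt n) :
    X n k c a l u y = dv n (Pi.single l 1, 0) u y
      + eps l * (2 * k * c * (y.1 (sig l) - a (sig l)) * Sg n a y ^ (k - 1))
        * dv n (0, 1) u y := by
  cases l <;> simp [X, pdx, pdt, dv, eps, sig] <;> ring

lemma sum_mul_single (f : (Fin n ⊕ Fin n) → ℝ) (l : Fin n ⊕ Fin n) :
    ∑ m : Fin n ⊕ Fin n, f m * (Pi.single l 1 : (Fin n ⊕ Fin n) → ℝ) m = f l := by
  simp [Pi.single_apply, mul_ite, mul_one, mul_zero]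

lemma dv_Sg_x (l : Fin n ⊕ Fin n) (y : Pt n) :
    dv n (Pi.single l 1, 0) (Sg n a) y = 2 * (y.1 l - a l) := by
  rw [dv_Sg]
  simpa using sum_mul_single (fun m => 2 * (y.1 m - a m)) l

lemma dv_Sg_t (y : Pt n) : dv n ((0 : (Fin n ⊕ Fin n) → ℝ), (1 : ℝ)) (Sg n a) y = 0 := by
  rw [dv_Sg]; simp

/-- Closed form for `X_l ψ`. -/
lemma X_psi_eq (hk : k ≠ 0) (hc : c ≠ 0) (l : Fin n ⊕ Fin n) {y : Pt n}
    (hy : 0 < Sg n a y) :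
    X n k c a l (psi n k c a s) y = FF n k c a s l y := by
  rw [X_apply, dv_psi hc hy, dv_psi hc hy, dv_hfun hy, dv_hfun hy, dv_Sg_x, dv_Sg_t]
  unfold FF gg
  field_simp
  ring



lemma diff_g1 {y : Pt n} (hy : 0 < Sg n a y) (l : Fin n ⊕ Fin n) :
    DifferentiableAt ℝ (fun z : Pt n => (z.1 l - a l) * Sg n a z ^ (2 * k - 1)) y :=
  (diff_A l y).mul ((diff_Sg y).rpow_const (Or.inl hy.ne'))

lemma diff_g2 {y : Pt n} (hy : 0 < Sg n a y) (l : Fin n ⊕ Fin n) :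
    DifferentiableAt ℝ
      (fun z : Pt n => (z.1 (sig l) - a (sig l)) * (Sg n a z ^ (k - 1) * (z.2 - s))) y :=
  (diff_A (sig l) y).mul (((diff_Sg y).rpow_const (Or.inl hy.ne')).mul
    ((diff_snd y).sub_const s))

lemma diff_gg {y : Pt n} (hy : 0 < Sg n a y) (l : Fin n ⊕ Fin n) :
    DifferentiableAt ℝ (gg n k c a s l) y := by
  have : gg n k c a s l = fun z : Pt n =>
      c * ((z.1 l - a l) * Sg n a z ^ (2 * k - 1))
      + eps l * ((z.1 (sig l) - a (sig l)) * (Sg n a z ^ (k - 1) * (z.2 - s))) := rfl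
  rw [this]
  exact ((diff_g1 hy l).const_mul c).add ((diff_g2 hy l).const_mul (eps l))

lemma dv_tau (v : Pt n) (y : Pt n) : dv n v (fun z : Pt n => z.2 - s) y = v.2 := by
  rw [dv_sub_const, dv_snd]

lemma dv_gg {y : Pt n} (hy : 0 < Sg n a y) (v : Pt n) (l : Fin n ⊕ Fin n) :
    dv n v (gg n k c a s l) y =
      c * ((y.1 l - a l) * ((2 * k - 1) * Sg n a y ^ (2 * k - 1 - 1) * dv n v (Sg n a) y)
        + Sg n a y ^ (2 * k - 1) * v.1 l)
      + eps l * ((y.1 (sig l) - a (sig l)) *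
          (Sg n a y ^ (k - 1) * v.2
            + (y.2 - s) * ((k - 1) * Sg n a y ^ (k - 1 - 1) * dv n v (Sg n a) y))
        + Sg n a y ^ (k - 1) * (y.2 - s) * v.1 (sig l)) := by
  have h0 : gg n k c a s l = fun z : Pt n =>
      (fun z : Pt n => c * ((z.1 l - a l) * Sg n a z ^ (2 * k - 1))) z
      + (fun z : Pt n =>
          eps l * ((z.1 (sig l) - a (sig l)) * (Sg n a z ^ (k - 1) * (z.2 - s)))) z := rfl
  rw [h0, dv_add ((diff_g1 hy l).const_mul c) ((diff_g2 hy l).const_mul (eps l)),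
    dv_const_mul (diff_g1 hy l), dv_const_mul (diff_g2 hy l),
    dv_mul (diff_A l y) ((diff_Sg y).rpow_const (Or.inl hy.ne')),
    dv_mul (diff_A (sig l) y)
      (((diff_Sg y).rpow_const (Or.inl hy.ne')).fun_mul ((diff_snd y).sub_const s)),
    dv_mul ((diff_Sg y).rpow_const (Or.inl hy.ne')) ((diff_snd y).sub_const s),
    dv_rpow (diff_Sg y) hy.ne', dv_rpow (diff_Sg y) hy.ne', dv_A, dv_A, dv_tau]


lemma diff_FF (hc : c ≠ 0) {y : Pt n} (hy : 0 < Sg n a y) (l : Fin n ⊕ Fin n) :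
    DifferentiableAt ℝ (FF n k c a s l) y := by
  have : FF n k c a s l = fun z : Pt n =>
      c * (hfun n k c a s z ^ (1 / (4 * k) - 1) * gg n k c a s l z) := rfl
  rw [this]
  exact (((diff_hfun hy).rpow_const (Or.inl (hfun_pos hc hy).ne')).mul (diff_gg hy l)).const_mul c

lemma dv_FF (hc : c ≠ 0) {y : Pt n} (hy : 0 < Sg n a y) (v : Pt n) (l : Fin n ⊕ Fin n) :
    dv n v (FF n k c a s l) y =
      c * (hfun n k c a s y ^ (1 / (4 * k) - 1) * dv n v (gg n k c a s l) y
        + gg n k c a s l y * ((1 / (4 * k) - 1) * hfun n k c a s y ^ (1 / (4 * k) - 1 - 1)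
            * dv n v (hfun n k c a s) y)) := by
  have h0 : FF n k c a s l = fun z : Pt n =>
      c * ((fun z : Pt n => hfun n k c a s z ^ (1 / (4 * k) - 1)) z
        * (fun z : Pt n => gg n k c a s l z) z) := rfl
  rw [h0, dv_const_mul (((diff_hfun hy).rpow_const (Or.inl (hfun_pos hc hy).ne')).fun_mul
      (diff_gg hy l)),
    dv_mul ((diff_hfun hy).rpow_const (Or.inl (hfun_pos hc hy).ne')) (diff_gg hy l),
    dv_rpow (diff_hfun hy) (hfun_pos hc hy).ne']

/-- Closed form for `X_i (g_j)`. -/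
def Xg (n : ℕ) (k c : ℝ) (a : Fin n ⊕ Fin n → ℝ) (s : ℝ) (i j : Fin n ⊕ Fin n)
    (y : Pt n) : ℝ :=
  c * ((y.1 j - a j) * ((2 * k - 1) * Sg n a y ^ (2 * k - 1 - 1) * (2 * (y.1 i - a i)))
      + Sg n a y ^ (2 * k - 1) * (if j = i then (1 : ℝ) else 0))
  + eps j * ((y.1 (sig j) - a (sig j)) *
        ((y.2 - s) * ((k - 1) * Sg n a y ^ (k - 1 - 1) * (2 * (y.1 i - a i))))
      + Sg n a y ^ (k - 1) * (y.2 - s) * (if sig j = i then (1 : ℝ) else 0))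
  + eps i * (2 * k * c * (y.1 (sig i) - a (sig i)) * Sg n a y ^ (k - 1))
      * (eps j * ((y.1 (sig j) - a (sig j)) * Sg n a y ^ (k - 1)))

set_option maxHeartbeats 1000000 in
lemma X_FF (hc : c ≠ 0) (i j : Fin n ⊕ Fin n) {y : Pt n} (hy : 0 < Sg n a y) :
    X n k c a i (FF n k c a s j) y =
      c * (gg n k c a s j y * ((1 / (4 * k) - 1) * hfun n k c a s y ^ (1 / (4 * k) - 1 - 1)
            * (4 * k * c * gg n k c a s i y))
        + hfun n k c a s y ^ (1 / (4 * k) - 1) * Xg n k c a s i j y) := by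
  rw [X_apply, dv_FF hc hy _ j, dv_FF hc hy _ j, dv_gg hy _ j, dv_gg hy _ j,
    dv_hfun hy, dv_hfun hy, dv_Sg_x, dv_Sg_t]
  simp only [Prod.fst, Prod.snd, Pi.single_apply, Pi.zero_apply,
    mul_zero, zero_mul, mul_one, add_zero, zero_add]
  unfold Xg gg
  ring

lemma cont_Sg : Continuous (Sg n a) := by
  apply continuous_iff_continuousAt.2
  exact fun y => (diff_Sg y).continuousAt

lemma X_X_psi (hk : k ≠ 0) (hc : c ≠ 0) (i j : Fin n ⊕ Fin n) {x : Pt n}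
    (hx : 0 < Sg n a x) :
    X n k c a i (X n k c a j (psi n k c a s)) x =
      c * (gg n k c a s j x * ((1 / (4 * k) - 1) * hfun n k c a s x ^ (1 / (4 * k) - 1 - 1)
            * (4 * k * c * gg n k c a s i x))
        + hfun n k c a s x ^ (1 / (4 * k) - 1) * Xg n k c a s i j x) := by
  have hU : IsOpen {y : Pt n | 0 < Sg n a y} := isOpen_lt continuous_const cont_Sg
  have hev : (X n k c a j (psi n k c a s)) =ᶠ[nhds x] FF n k c a s j :=
    Filter.eventuallyEq_of_mem (hU.mem_nhds hx) fun y hy => X_psi_eq hk hc j hy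
  have h1 : dv n (Pi.single i 1, 0) (X n k c a j (psi n k c a s)) x
      = dv n (Pi.single i 1, 0) (FF n k c a s j) x := by
    rw [dv, dv, hev.fderiv_eq]
  have h2 : dv n ((0 : (Fin n ⊕ Fin n) → ℝ), (1 : ℝ)) (X n k c a j (psi n k c a s)) x
      = dv n ((0 : (Fin n ⊕ Fin n) → ℝ), (1 : ℝ)) (FF n k c a s j) x := by
    rw [dv, dv, hev.fderiv_eq]
  rw [X_apply, h1, h2, ← X_apply, X_FF hc i j hx]

lemma eps_sq (l : Fin n ⊕ Fin n) : eps (n := n) l * eps l = 1 := by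
  cases l <;> simp [eps]

lemma if_sig (i j : Fin n ⊕ Fin n) :
    (if sig j = i then (1 : ℝ) else 0) = (if j = sig i then 1 else 0) := by
  cases i <;> cases j <;> simp [sig, eq_comm]

lemma sum_eps_A_Asig (y : Pt n) :
    ∑ l : Fin n ⊕ Fin n, eps l * ((y.1 l - a l) * (y.1 (sig l) - a (sig l))) = 0 := by
  rw [Fintype.sum_sum_type]
  simp only [eps, sig, Sum.elim_inl, Sum.elim_inr]
  rw [← Finset.sum_add_distrib]
  exact Finset.sum_eq_zero fun i _ => by ring

lemma sum_Asig_sq (y : Pt n) :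
    ∑ l : Fin n ⊕ Fin n, (y.1 (sig l) - a (sig l)) ^ 2 = Sg n a y := by
  have h2 : Sg n a y = ∑ l : Fin n ⊕ Fin n, (y.1 l - a l) ^ 2 := rfl
  rw [Fintype.sum_sum_type, h2, Fintype.sum_sum_type]
  simp only [sig, Sum.elim_inl, Sum.elim_inr]
  ring

lemma gg_eq {y : Pt n} (hy : 0 < Sg n a y) (l : Fin n ⊕ Fin n) :
    gg n k c a s l y =
      c * ((y.1 l - a l) * (Sg n a y ^ (k-1) * Sg n a y ^ (k-1) * Sg n a y))
      + eps l * ((y.1 (sig l) - a (sig l)) * (Sg n a y ^ (k - 1) * (y.2 - s))) := by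
  have e1 : Sg n a y ^ (2*k-1) = Sg n a y ^ (k-1) * Sg n a y ^ (k-1) * Sg n a y := by
    rw [show (2*k-1 : ℝ) = (k-1) + ((k-1) + 1) by ring, rpow_add hy, rpow_add hy, rpow_one]
    ring
  rw [gg, e1]

lemma sum_A_gg {y : Pt n} (hy : 0 < Sg n a y) :
    ∑ l : Fin n ⊕ Fin n, (y.1 l - a l) * gg n k c a s l y
      = c * (Sg n a y ^ (k-1) * Sg n a y ^ (k-1)) * (Sg n a y * Sg n a y) := by
  have h0 : ∀ l : Fin n ⊕ Fin n, (y.1 l - a l) * gg n k c a s l y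
      = (c * (Sg n a y ^ (k-1) * Sg n a y ^ (k-1) * Sg n a y)) * (y.1 l - a l) ^ 2
        + (Sg n a y ^ (k-1) * (y.2 - s))
            * (eps l * ((y.1 l - a l) * (y.1 (sig l) - a (sig l)))) := by
    intro l; rw [gg_eq hy]; ring
  rw [Finset.sum_congr rfl fun l _ => h0 l, Finset.sum_add_distrib,
    ← Finset.mul_sum, ← Finset.mul_sum, sum_eps_A_Asig]
  have h2 : ∑ l : Fin n ⊕ Fin n, (y.1 l - a l) ^ 2 = Sg n a y := rfl
  rw [h2]; ring

lemma sum_epsAsig_gg {y : Pt n} (hy : 0 < Sg n a y) :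
    ∑ l : Fin n ⊕ Fin n, eps l * (y.1 (sig l) - a (sig l)) * gg n k c a s l y
      = Sg n a y ^ (k-1) * (y.2 - s) * Sg n a y := by
  have h0 : ∀ l : Fin n ⊕ Fin n, eps l * (y.1 (sig l) - a (sig l)) * gg n k c a s l y
      = (c * (Sg n a y ^ (k-1) * Sg n a y ^ (k-1) * Sg n a y))
            * (eps l * ((y.1 l - a l) * (y.1 (sig l) - a (sig l))))
        + (Sg n a y ^ (k-1) * (y.2 - s)) * ((eps l * eps l) * (y.1 (sig l) - a (sig l)) ^ 2) := by
    intro l; rw [gg_eq hy]; ring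
  rw [Finset.sum_congr rfl fun l _ => h0 l, Finset.sum_add_distrib,
    ← Finset.mul_sum, ← Finset.mul_sum, sum_eps_A_Asig]
  have h1 : ∀ l : Fin n ⊕ Fin n, (eps (n := n) l * eps l) * (y.1 (sig l) - a (sig l)) ^ 2
      = (y.1 (sig l) - a (sig l)) ^ 2 := fun l => by rw [eps_sq]; ring
  rw [Finset.sum_congr rfl fun l _ => h1 l, sum_Asig_sq]
  ring

lemma sum_gg_sq (hc : c ≠ 0) {y : Pt n} (hy : 0 < Sg n a y) :
    ∑ l : Fin n ⊕ Fin n, gg n k c a s l y ^ 2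
      = Sg n a y ^ (k-1) * Sg n a y ^ (k-1) * Sg n a y * hfun n k c a s y := by
  have h0 : ∀ l : Fin n ⊕ Fin n, gg n k c a s l y ^ 2
      = (c^2 * (Sg n a y ^ (k-1) * Sg n a y ^ (k-1) * Sg n a y)^2) * (y.1 l - a l) ^ 2
        + (2 * c * (Sg n a y ^ (k-1) * Sg n a y ^ (k-1) * Sg n a y)
            * (Sg n a y ^ (k-1) * (y.2 - s)))
            * (eps l * ((y.1 l - a l) * (y.1 (sig l) - a (sig l))))
        + ((Sg n a y ^ (k-1) * (y.2 - s))^2)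
            * ((eps l * eps l) * (y.1 (sig l) - a (sig l)) ^ 2) := by
    intro l; rw [gg_eq hy]; ring
  rw [Finset.sum_congr rfl fun l _ => h0 l, Finset.sum_add_distrib, Finset.sum_add_distrib,
    ← Finset.mul_sum, ← Finset.mul_sum, ← Finset.mul_sum, sum_eps_A_Asig]
  have h1 : ∀ l : Fin n ⊕ Fin n, (eps (n := n) l * eps l) * (y.1 (sig l) - a (sig l)) ^ 2
      = (y.1 (sig l) - a (sig l)) ^ 2 := fun l => by rw [eps_sq]; ring
  rw [Finset.sum_congr rfl fun l _ => h1 l, sum_Asig_sq]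
  have h2 : ∑ l : Fin n ⊕ Fin n, (y.1 l - a l) ^ 2 = Sg n a y := rfl
  rw [h2]
  have e4 : Sg n a y ^ (2*k) = Sg n a y ^ (k-1) * Sg n a y ^ (k-1) * (Sg n a y * Sg n a y) := by
    rw [show (2*k : ℝ) = (k-1) + ((k-1) + (1+1)) by ring, rpow_add hy, rpow_add hy,
      rpow_add hy, rpow_one]
    ring
  rw [hfun, e4]; ring

lemma sum_eps_gg_ggsig {y : Pt n} :
    ∑ l : Fin n ⊕ Fin n, eps (sig l) * (gg n k c a s l y * gg n k c a s (sig l) y) = 0 := by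
  rw [Fintype.sum_sum_type]
  simp only [eps, sig, Sum.elim_inl, Sum.elim_inr]
  rw [← Finset.sum_add_distrib]
  exact Finset.sum_eq_zero fun i _ => by ring

lemma sum_gg_Xg {y : Pt n} (hy : 0 < Sg n a y) (i : Fin n ⊕ Fin n) :
    ∑ j : Fin n ⊕ Fin n, gg n k c a s j y * Xg n k c a s i j y
      = (c * (2*k-1) * (2 * (y.1 i - a i)) * Sg n a y ^ (2*k-1-1))
          * (c * (Sg n a y ^ (k-1) * Sg n a y ^ (k-1)) * (Sg n a y * Sg n a y))
        + c * Sg n a y ^ (2*k-1) * gg n k c a s i y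
        + ((k-1) * (2 * (y.1 i - a i)) * (y.2 - s) * Sg n a y ^ (k-1-1)
            + 2*k*c * eps i * (y.1 (sig i) - a (sig i)) * Sg n a y ^ (k-1) * Sg n a y ^ (k-1))
          * (Sg n a y ^ (k-1) * (y.2 - s) * Sg n a y)
        + Sg n a y ^ (k-1) * (y.2 - s) * (eps (sig i) * gg n k c a s (sig i) y) := by
  have h0 : ∀ j : Fin n ⊕ Fin n, gg n k c a s j y * Xg n k c a s i j y
      = (c * (2*k-1) * (2 * (y.1 i - a i)) * Sg n a y ^ (2*k-1-1))
          * ((y.1 j - a j) * gg n k c a s j y)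
        + (c * Sg n a y ^ (2*k-1))
            * (gg n k c a s j y * (if j = i then (1:ℝ) else 0))
        + ((k-1) * (2 * (y.1 i - a i)) * (y.2 - s) * Sg n a y ^ (k-1-1)
            + 2*k*c * eps i * (y.1 (sig i) - a (sig i)) * Sg n a y ^ (k-1) * Sg n a y ^ (k-1))
            * (eps j * (y.1 (sig j) - a (sig j)) * gg n k c a s j y)
        + (Sg n a y ^ (k-1) * (y.2 - s))
            * (eps j * gg n k c a s j y * (if j = sig i then (1:ℝ) else 0)) := by
    intro j
    simp only [Xg, if_sig]
    ring
  rw [Finset.sum_congr rfl fun j _ => h0 j, Finset.sum_add_distrib, Finset.sum_add_distrib,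
    Finset.sum_add_distrib, ← Finset.mul_sum, ← Finset.mul_sum, ← Finset.mul_sum,
    ← Finset.mul_sum, sum_A_gg hy, sum_epsAsig_gg hy]
  have h1 : ∑ j : Fin n ⊕ Fin n, gg n k c a s j y * (if j = i then (1:ℝ) else 0)
      = gg n k c a s i y := by
    simp [mul_ite, mul_one, mul_zero]
  have h2 : ∑ j : Fin n ⊕ Fin n, eps j * gg n k c a s j y * (if j = sig i then (1:ℝ) else 0)
      = eps (sig i) * gg n k c a s (sig i) y := by
    simp [mul_ite, mul_one, mul_zero]
  rw [h1, h2]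

theorem stmt13 (n : ℕ) (hn : 1 ≤ n) (a : Fin n ⊕ Fin n → ℝ) (s : ℝ)
    (c k : ℝ) (hc : c ≠ 0) (hk : 0 < k)
    (x : Pt n) (hx0 : x ≠ (a, s)) (hx : Sg n a x ≠ 0) :
    ∑ i : Fin n ⊕ Fin n, ∑ j : Fin n ⊕ Fin n,
      X n k c a i (psi n k c a s) x * X n k c a j (psi n k c a s) x *
        X n k c a i (X n k c a j (psi n k c a s)) x = 0 := by
  have hx' : 0 < Sg n a x := lt_of_le_of_ne (Sg_nonneg x) (Ne.symm hx)
  have hk' : k ≠ 0 := hk.ne'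
  have hH : 0 < hfun n k c a s x := hfun_pos hc hx'
  -- abbreviations (purely textual)
  have key : ∀ i j : Fin n ⊕ Fin n,
      X n k c a i (psi n k c a s) x * X n k c a j (psi n k c a s) x *
        X n k c a i (X n k c a j (psi n k c a s)) x
      = (4*k*c^4*(1/(4*k)-1) * hfun n k c a s x ^ (1/(4*k)-1) * hfun n k c a s x ^ (1/(4*k)-1)
            * hfun n k c a s x ^ (1/(4*k)-1-1))
          * (gg n k c a s i x ^ 2 * gg n k c a s j x ^ 2)
        + (c^3 * hfun n k c a s x ^ (1/(4*k)-1) * hfun n k c a s x ^ (1/(4*k)-1)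
            * hfun n k c a s x ^ (1/(4*k)-1))
          * (gg n k c a s i x * (gg n k c a s j x * Xg n k c a s i j x)) := by
    intro i j
    rw [X_psi_eq hk' hc i hx', X_psi_eq hk' hc j hx', X_X_psi hk' hc i j hx']
    unfold FF
    ring
  set C1 : ℝ := 4*k*c^4*(1/(4*k)-1) * hfun n k c a s x ^ (1/(4*k)-1)
      * hfun n k c a s x ^ (1/(4*k)-1) * hfun n k c a s x ^ (1/(4*k)-1-1) with hC1
  set C2 : ℝ := c^3 * hfun n k c a s x ^ (1/(4*k)-1) * hfun n k c a s x ^ (1/(4*k)-1)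
      * hfun n k c a s x ^ (1/(4*k)-1) with hC2
  calc ∑ i : Fin n ⊕ Fin n, ∑ j : Fin n ⊕ Fin n,
      X n k c a i (psi n k c a s) x * X n k c a j (psi n k c a s) x *
        X n k c a i (X n k c a j (psi n k c a s)) x
      = ∑ i : Fin n ⊕ Fin n, ∑ j : Fin n ⊕ Fin n,
          (C1 * (gg n k c a s i x ^ 2 * gg n k c a s j x ^ 2)
            + C2 * (gg n k c a s i x * (gg n k c a s j x * Xg n k c a s i j x))) :=
        Finset.sum_congr rfl fun i _ => Finset.sum_congr rfl fun j _ => key i j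
    _ = ∑ i : Fin n ⊕ Fin n,
          (C1 * (gg n k c a s i x ^ 2 * ∑ l : Fin n ⊕ Fin n, gg n k c a s l x ^ 2)
            + C2 * (gg n k c a s i x * ∑ j : Fin n ⊕ Fin n,
                gg n k c a s j x * Xg n k c a s i j x)) := by
        refine Finset.sum_congr rfl fun i _ => ?_
        rw [Finset.sum_add_distrib, ← Finset.mul_sum, ← Finset.mul_sum,
          ← Finset.mul_sum, ← Finset.mul_sum]
    _ = 0 := ?_
  -- substitute the inner sums
  have hSQ := sum_gg_sq (n := n) (k := k) (c := c) (a := a) (s := s) hc hx'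
  rw [Finset.sum_congr rfl fun i _ => by rw [hSQ, sum_gg_Xg hx' i]]
  -- now a single sum; rearrange pointwise into helper shapes
  set P : ℝ := Sg n a x ^ (k-1) with hP
  set S : ℝ := Sg n a x with hS
  set τ : ℝ := x.2 - s with hτ
  set Hf : ℝ := hfun n k c a s x with hHf
  have step : ∀ i : Fin n ⊕ Fin n,
      (C1 * (gg n k c a s i x ^ 2 * (P * P * S * Hf))
        + C2 * (gg n k c a s i x *
          ((c * (2*k-1) * (2 * (x.1 i - a i)) * S ^ (2*k-1-1)) * (c * (P * P) * (S * S))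
            + c * S ^ (2*k-1) * gg n k c a s i x
            + ((k-1) * (2 * (x.1 i - a i)) * τ * S ^ (k-1-1)
                + 2*k*c * eps i * (x.1 (sig i) - a (sig i)) * P * P) * (P * τ * S)
            + P * τ * (eps (sig i) * gg n k c a s (sig i) x))))
      = (C1 * (P * P * S * Hf) + C2 * (c * S ^ (2*k-1))) * (gg n k c a s i x ^ 2)
        + (C2 * (c * (2*k-1) * 2 * S ^ (2*k-1-1) * (c * (P*P) * (S*S))
            + (k-1) * 2 * τ * S ^ (k-1-1) * (P * τ * S)))
            * ((x.1 i - a i) * gg n k c a s i x)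
        + (C2 * (2*k*c * P * P * (P * τ * S)))
            * (eps i * (x.1 (sig i) - a (sig i)) * gg n k c a s i x)
        + (C2 * (P * τ)) * (eps (sig i) * (gg n k c a s i x * gg n k c a s (sig i) x)) := by
    intro i; ring
  rw [Finset.sum_congr rfl fun i _ => step i, Finset.sum_add_distrib, Finset.sum_add_distrib,
    Finset.sum_add_distrib, ← Finset.mul_sum, ← Finset.mul_sum, ← Finset.mul_sum,
    ← Finset.mul_sum, hSQ, sum_A_gg hx', sum_epsAsig_gg hx', sum_eps_gg_ggsig]
  -- final scalar identity
  have e1 : S ^ (2*k-1) = P * P * S := by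
    rw [hP, hS, show (2*k-1 : ℝ) = (k-1) + ((k-1) + 1) by ring, rpow_add hx', rpow_add hx',
      rpow_one]; ring
  have e2 : S ^ (2*k-1-1) = P * P := by
    rw [hP, hS, show (2*k-1-1 : ℝ) = (k-1) + (k-1) by ring, rpow_add hx']
  have e3 : S ^ (k-1-1) = P / S := by
    rw [hP, hS, show (k-1-1 : ℝ) = (k-1) + (-1) by ring, rpow_add hx', rpow_neg_one]
    ring
  have e5 : Hf ^ (1/(4*k)-1) = Hf ^ (1/(4*k)-1-1) * Hf := by
    nth_rewrite 1 [show (1/(4*k)-1 : ℝ) = (1/(4*k)-1-1) + 1 by ring]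
    rw [rpow_add hH, rpow_one]
  have e4 : Hf = c^2 * (P * P * (S * S)) + τ^2 := by
    rw [hHf, hfun, hP, hS, hτ, show (2*k : ℝ) = (k-1) + ((k-1) + (1+1)) by ring,
      rpow_add hx', rpow_add hx', rpow_add hx', rpow_one]; ring
  rw [hC1, hC2, e1, e2, e3, e5, e4]
  have hS0 : S ≠ 0 := hx
  field_simp
  ring
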